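/- The operators S_{i,s} on ℓ²(𝔽_{n₁}⁺×⋯×𝔽_{n_k}⁺) are isometries with pairwise orthogonal ranges for each fixed i; for each i∈{1,…,k}, Σ_{s=1}^{n_i} S_{i,s}S_{i,s}* χ_{(α₁,…,α_k)} equals χ_{(α₁,…,α_k)} if |α_i|≥1 and 0 if α_i=g₀ (so each 𝐒_i=[S_{i,1}⋯S_{i,n_i}] is a row isometry); and S_{i,s}* S_{j,t} = conj(λ_{ij}(s,t)) S_{j,t} S_{i,s}* for all i≠j, s∈{1,…,n_i}, t∈{1,…,n_j}; consequently 𝐒=(𝐒₁,…,𝐒_k) is a k-tuple of doubly Λ-commuting row isometries. -/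

import Mathlib

open scoped InnerProductSpace ENNReal ComplexConjugate
open Filter Topology ContinuousLinearMap

set_option maxHeartbeats 400000
set_option synthInstance.maxHeartbeats 100000

noncomputable section

namespace Polyball

/-! ## Basic setup: words, the Hilbert space `ℓ²(𝔽_{n₁}⁺×⋯×𝔽_{n_k}⁺)` and fibered versions. -/

variable {k : ℕ}

/-- A point of `𝔽_{n₁}⁺ × ⋯ × 𝔽_{n_k}⁺`: a `k`-tuple of words. -/
abbrev Word (n : Fin k → ℕ) : Type := ∀ i, List (Fin (n i))

/-- total length `|β₁| + ⋯ + |β_k|` -/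
def totalLen {n : Fin k → ℕ} (β : Word n) : ℕ := ∑ i, (β i).length

/-- `ℓ²(𝔽_{n₁}⁺×⋯×𝔽_{n_k}⁺) ⊗ D`, realized as `D`-valued `ℓ²`. -/
abbrev L2 (n : Fin k → ℕ) (D : Type*) [NormedAddCommGroup D] [InnerProductSpace ℂ D] :
    Type _ := lp (fun _ : Word n => D) 2

/-- the standard orthonormal basis vector `χ_α`. -/
def chi {n : Fin k → ℕ} (α : Word n) : L2 n ℂ := lp.single 2 α 1

section elem

variable {n : Fin k → ℕ} {D D' : Type*} [NormedAddCommGroup D] [InnerProductSpace ℂ D]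
  [NormedAddCommGroup D'] [InnerProductSpace ℂ D']

lemma memℓp_elem (x : L2 n ℂ) (d : D) : Memℓp (fun w => x w • d) 2 := by
  apply memℓp_gen
  have hx : Summable fun w => ‖x w‖ ^ (2 : ℝ≥0∞).toReal :=
    (memℓp_gen_iff (by norm_num)).1 (lp.memℓp x)
  have := hx.mul_right (‖d‖ ^ (2 : ℝ≥0∞).toReal)
  refine this.congr fun w => ?_
  rw [norm_smul, Real.mul_rpow (norm_nonneg _) (norm_nonneg _)]

/-- the elementary tensor `x ⊗ d` in `ℓ² ⊗ D`. -/
def elem (x : L2 n ℂ) (d : D) : L2 n D := ⟨fun w => x w • d, memℓp_elem x d⟩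

/-- `B` is the ampliation `A ⊗ I_D`. -/
def IsAmpliation (A : L2 n ℂ →L[ℂ] L2 n ℂ) (B : L2 n D →L[ℂ] L2 n D) : Prop :=
  ∀ x d, B (elem x d) = elem (A x) d

lemma memℓp_ampR (V : D →L[ℂ] D') (f : L2 n D) : Memℓp (fun w => V (f w)) 2 := by
  apply memℓp_gen
  have hf : Summable fun w => ‖f w‖ ^ (2 : ℝ≥0∞).toReal :=
    (memℓp_gen_iff (by norm_num)).1 (lp.memℓp f)
  have h2 := (hf.mul_left (‖V‖ ^ (2 : ℝ≥0∞).toReal))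
  refine Summable.of_nonneg_of_le (fun w => ?_) (fun w => ?_) h2
  · positivity
  · rw [← Real.mul_rpow (norm_nonneg _) (norm_nonneg _)]
    exact Real.rpow_le_rpow (norm_nonneg _) (V.le_opNorm _) (by norm_num)

/-- the ampliation `I_{ℓ²} ⊗ V` of an operator `V : D →L[ℂ] D'`, acting pointwise. -/
def ampR (V : D →L[ℂ] D') : L2 n D →L[ℂ] L2 n D' :=
  LinearMap.mkContinuous
    { toFun := fun f => (⟨fun w => V (f w), memℓp_ampR V f⟩ : L2 n D')
      map_add' := by intro f g; ext w; simp [lp.coeFn_add]; rfl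
      map_smul' := by intro c f; ext w; simp [lp.coeFn_smul] }
    ‖V‖ (by
      intro f
      refine lp.norm_le_of_forall_sum_le (by norm_num) (by positivity) fun s => ?_
      calc ∑ w ∈ s, ‖V (f w)‖ ^ (2 : ℝ≥0∞).toReal
          ≤ ∑ w ∈ s, (‖V‖ * ‖f w‖) ^ (2 : ℝ≥0∞).toReal := by
            refine Finset.sum_le_sum fun w _ => ?_
            exact Real.rpow_le_rpow (norm_nonneg _) (V.le_opNorm _) (by norm_num)
        _ = ‖V‖ ^ (2 : ℝ≥0∞).toReal * ∑ w ∈ s, ‖f w‖ ^ (2 : ℝ≥0∞).toReal := by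
            rw [Finset.mul_sum]
            refine Finset.sum_congr rfl fun w _ => ?_
            rw [Real.mul_rpow (norm_nonneg _) (norm_nonneg _)]
        _ ≤ ‖V‖ ^ (2 : ℝ≥0∞).toReal * ‖f‖ ^ (2 : ℝ≥0∞).toReal := by
            refine mul_le_mul_of_nonneg_left ?_ (by positivity)
            exact lp.sum_rpow_le_norm_rpow (by norm_num) f s
        _ = (‖V‖ * ‖f‖) ^ (2 : ℝ≥0∞).toReal := by
            rw [Real.mul_rpow (norm_nonneg _) (norm_nonneg _)])

end elem

/-! ## Λ-data and the twisted shifts -/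

/-- The data `Λ = (Λ_{ij})` of unimodular twisting matrices with `Λ_{ji} = Λ_{ij}*`. -/
structure LambdaData (n : Fin k → ℕ) where
  lam : ∀ i j : Fin k, Fin (n i) → Fin (n j) → ℂ
  unimodular : ∀ i j s t, ‖lam i j s t‖ = 1
  hermitian : ∀ i j s t, i ≠ j → lam j i t s = conj (lam i j s t)

variable {n : Fin k → ℕ}

/-- `𝛌_{i,j}(s,β) = ∏_b λ_{ij}(s, j_b)`. -/
def boldLam (Λ : LambdaData n) (i j : Fin k) (s : Fin (n i)) (β : List (Fin (n j))) : ℂ :=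
  (β.map fun t => Λ.lam i j s t).prod

/-- the twist `𝛌_{i,1}(s,α₁)⋯𝛌_{i,i-1}(s,α_{i-1})`. -/
def twist (Λ : LambdaData n) (i : Fin k) (s : Fin (n i)) (α : Word n) : ℂ :=
  ∏ j : Fin k, if j < i then boldLam Λ i j s (α j) else 1

/-- `S` is the `k`-tuple of twisted shifts (the universal model) associated with `Λ`. -/
def IsTwistedShift (Λ : LambdaData n) (S : ∀ i, Fin (n i) → L2 n ℂ →L[ℂ] L2 n ℂ) : Prop :=
  ∀ (i : Fin k) (s : Fin (n i)) (α : Word n),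
    S i s (chi α) = twist Λ i s α • chi (Function.update α i (s :: α i))

/-! ## Tuples of operators, the maps `Φ`, `Δ`, and the regular Λ-polyball -/

section tuples

variable {H : Type*} [NormedAddCommGroup H] [InnerProductSpace ℂ H] [CompleteSpace H]

/-- `T_{i,α} := T_{i,p₁} ⋯ T_{i,p_m}` for a word `α = g_{p₁}⋯g_{p_m}`. -/
def wordOp (T : ∀ i, Fin (n i) → H →L[ℂ] H) (i : Fin k) (α : List (Fin (n i))) : H →L[ℂ] H :=
  (α.map fun s => T i s).prod

/-- `T_β := T_{1,β₁} T_{2,β₂} ⋯ T_{k,β_k}` for `β ∈ 𝔽_{n₁}⁺×⋯×𝔽_{n_k}⁺`. -/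
def fullOp (T : ∀ i, Fin (n i) → H →L[ℂ] H) (β : Word n) : H →L[ℂ] H :=
  ((List.finRange k).map fun i => wordOp T i (β i)).prod

/-- `Φ_{T_i}(X) = Σ_s T_{i,s} X T_{i,s}^*`. -/
def Phi (T : ∀ i, Fin (n i) → H →L[ℂ] H) (i : Fin k) (X : H →L[ℂ] H) : H →L[ℂ] H :=
  ∑ s : Fin (n i), T i s ∘L X ∘L adjoint (T i s)

/-- `Δ_T(X) = (id - Φ_{T_k}) ∘ ⋯ ∘ (id - Φ_{T_1})(X)`. -/
def DeltaMap (T : ∀ i, Fin (n i) → H →L[ℂ] H) (X : H →L[ℂ] H) : H →L[ℂ] H :=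
  (List.finRange k).foldl (fun Y i => Y - Phi T i Y) X

/-- `(id - Φ_{T_k}^{p_k}) ∘ ⋯ ∘ (id - Φ_{T_1}^{p₁})(I)`. -/
def partialDelta (T : ∀ i, Fin (n i) → H →L[ℂ] H) (p : Fin k → ℕ) : H →L[ℂ] H :=
  (List.finRange k).foldl (fun Y i => Y - (Phi T i)^[p i] Y) 1

/-- the scaled tuple `rT`. -/
def scale (r : ℝ) (T : ∀ i, Fin (n i) → H →L[ℂ] H) : ∀ i, Fin (n i) → H →L[ℂ] H :=
  fun i s => (r : ℂ) • T i s

/-- membership in the regular Λ-polyball `𝐁_Λ(H)`. -/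
structure InPolyball (Λ : LambdaData n) (T : ∀ i, Fin (n i) → H →L[ℂ] H) : Prop where
  contraction : ∀ i, ((1 : H →L[ℂ] H) - Phi T i 1).IsPositive
  comm : ∀ i j, i ≠ j → ∀ s t, T i s ∘L T j t = Λ.lam i j s t • (T j t ∘L T i s)
  regular : ∀ r : ℝ, 0 ≤ r → r < 1 → (DeltaMap (scale r T) 1).IsPositive

/-- membership in the open polyball `𝐁_Λ°(H)`: `Δ_T(I)` is an invertible positive operator. -/
def InOpenPolyball (Λ : LambdaData n) (T : ∀ i, Fin (n i) → H →L[ℂ] H) : Prop :=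
  InPolyball Λ T ∧ (DeltaMap T 1).IsPositive ∧ IsUnit (DeltaMap T 1)

/-- purity: `Φ_{T_i}^p(I) → 0` strongly. -/
def IsPure (T : ∀ i, Fin (n i) → H →L[ℂ] H) : Prop :=
  ∀ (i : Fin k) (x : H), Tendsto (fun p => ((Phi T i)^[p] (1 : H →L[ℂ] H)) x) atTop (𝓝 0)

/-- completely non-coisometric. -/
def CNC (T : ∀ i, Fin (n i) → H →L[ℂ] H) : Prop :=
  ∀ h : H, (∀ p : Fin k → ℕ, ⟪partialDelta T p h, h⟫_ℂ = 0) → h = 0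

/-- `R` is the positive square root of `X`. -/
def IsSqrtOf (R X : H →L[ℂ] H) : Prop := R.IsPositive ∧ R ∘L R = X

/-- the defect space `D(T)`, the closure of the range of `Δ_T(I)`. -/
def defectSpace (T : ∀ i, Fin (n i) → H →L[ℂ] H) : Submodule ℂ H :=
  (LinearMap.range (DeltaMap T (1 : H →L[ℂ] H) : H →ₗ[ℂ] H)).topologicalClosure

instance (T : ∀ i, Fin (n i) → H →L[ℂ] H) : CompleteSpace ↥(defectSpace T) :=
  IsClosed.completeSpace_coe (hs := Submodule.isClosed_topologicalClosure _)

/-- the defect space `D(T)` as a Hilbert space in its own right. -/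
def DTcar (T : ∀ i, Fin (n i) → H →L[ℂ] H) : Type _ := ↥(defectSpace T)

instance (T : ∀ i, Fin (n i) → H →L[ℂ] H) : NormedAddCommGroup (DTcar T) :=
  inferInstanceAs (NormedAddCommGroup ↥(defectSpace T))
instance (T : ∀ i, Fin (n i) → H →L[ℂ] H) : InnerProductSpace ℂ (DTcar T) :=
  inferInstanceAs (InnerProductSpace ℂ ↥(defectSpace T))
instance (T : ∀ i, Fin (n i) → H →L[ℂ] H) : CompleteSpace (DTcar T) :=
  inferInstanceAs (CompleteSpace ↥(defectSpace T))

/-- the inclusion `D(T) ↪ H`. -/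
def inclDT (T : ∀ i, Fin (n i) → H →L[ℂ] H) : DTcar T →L[ℂ] H :=
  (defectSpace T).subtypeL

instance (p : Submodule ℂ H) : CompleteSpace ↥(p.topologicalClosure) :=
  (Submodule.isClosed_topologicalClosure _).completeSpace_coe

instance (K : Submodule ℂ H) : CompleteSpace ↥Kᗮ :=
  (Submodule.isClosed_orthogonal K).completeSpace_coe

/-- `K` is the noncommutative Berezin kernel of `T`:
`K h = Σ_β χ_β ⊗ Δ_T(I)^{1/2} T_β^* h ∈ ℓ² ⊗ D(T)`. -/
def IsBerezinKernel (T : ∀ i, Fin (n i) → H →L[ℂ] H)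
    (K : H →L[ℂ] L2 n (DTcar T)) : Prop :=
  ∃ R : H →L[ℂ] H, IsSqrtOf R (DeltaMap T 1) ∧
    ∀ (h : H) (β : Word n), inclDT T ((K h) β) = R (adjoint (fullOp T β) h)

end tuples

/-! ## polynomials, Hardy algebra, series -/

section algebra

variable {H : Type*} [NormedAddCommGroup H] [InnerProductSpace ℂ H] [CompleteSpace H]

/-- evaluation of noncommutative polynomials at the tuple `T`. -/
def polyEval (T : ∀ i, Fin (n i) → H →L[ℂ] H) :
    FreeAlgebra ℂ (Σ i : Fin k, Fin (n i)) →ₐ[ℂ] (H →L[ℂ] H) :=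
  FreeAlgebra.lift ℂ fun p => T p.1 p.2

/-- the set `𝒫({T_{i,s}})` of all polynomials in the `T_{i,s}` and the identity. -/
def polySet (T : ∀ i, Fin (n i) → H →L[ℂ] H) : Set (H →L[ℂ] H) :=
  Set.range (polyEval T)

/-- `A` has the formal Fourier representation `Σ_β c_β S_β`. -/
def HasFourier (S : ∀ i, Fin (n i) → L2 n ℂ →L[ℂ] L2 n ℂ) (c : Word n → ℂ)
    (A : L2 n ℂ →L[ℂ] L2 n ℂ) : Prop :=
  Memℓp c 2 ∧ ∀ γ : Word n, HasSum (fun β => c β • fullOp S β (chi γ)) (A (chi γ))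

/-- the noncommutative Hardy algebra `F^∞(𝐁_Λ)`. -/
def FInfty (S : ∀ i, Fin (n i) → L2 n ℂ →L[ℂ] L2 n ℂ) : Set (L2 n ℂ →L[ℂ] L2 n ℂ) :=
  {A | ∃ c, HasFourier S c A}

/-- the homogeneous part of degree `p` of the series `Σ_β c_β T_β`. -/
def degSum (T : ∀ i, Fin (n i) → H →L[ℂ] H) (c : Word n → ℂ) (p : ℕ) : H →L[ℂ] H :=
  ∑' β : {β : Word n // totalLen β = p}, c β.1 • fullOp T β.1

/-- the coefficients of `φ({r T_{i,s}})`, i.e. `r^{|β|} c_β`. -/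
def rCoeff (r : ℝ) (c : Word n → ℂ) : Word n → ℂ := fun β => (r : ℂ) ^ totalLen β * c β

/-- `Σ_{p≥0} f p` converges (partial sums) to `B` in operator norm. -/
def SeriesTo (f : ℕ → (H →L[ℂ] H)) (B : H →L[ℂ] H) : Prop :=
  Tendsto (fun N => ∑ p ∈ Finset.range N, f p) atTop (𝓝 B)

end algebra

/-! ## operator topologies via nets -/

section topologies

variable {H : Type*} [NormedAddCommGroup H] [InnerProductSpace ℂ H] [CompleteSpace H]

/-- convergence in the strong operator topology along a filter. -/
def SOTTendsto {ι : Type*} (l : Filter ι) (F : ι → (H →L[ℂ] H)) (A : H →L[ℂ] H) : Prop :=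
  ∀ x : H, Tendsto (fun i => F i x) l (𝓝 (A x))

/-- convergence in the weak operator topology along a filter. -/
def WOTTendsto {ι : Type*} (l : Filter ι) (F : ι → (H →L[ℂ] H)) (A : H →L[ℂ] H) : Prop :=
  ∀ x y : H, Tendsto (fun i => ⟪F i x, y⟫_ℂ) l (𝓝 ⟪A x, y⟫_ℂ)

/-- convergence in the w*-topology (σ-weak topology) along a filter. -/
def WstarTendsto {ι : Type*} (l : Filter ι) (F : ι → (H →L[ℂ] H)) (A : H →L[ℂ] H) : Prop :=
  ∀ x y : ℕ → H, Summable (fun j => ‖x j‖ ^ 2) → Summable (fun j => ‖y j‖ ^ 2) →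
    Tendsto (fun i => ∑' j, ⟪F i (x j), y j⟫_ℂ) l (𝓝 (∑' j, ⟪A (x j), y j⟫_ℂ))

/-- membership in the SOT-closure of a set of operators. -/
def InSOTClosure (𝒮 : Set (H →L[ℂ] H)) (A : H →L[ℂ] H) : Prop :=
  ∃ (ι : Type) (l : Filter ι), l.NeBot ∧ ∃ F : ι → (H →L[ℂ] H),
    (∀ i, F i ∈ 𝒮) ∧ SOTTendsto l F A

/-- membership in the WOT-closure of a set of operators. -/
def InWOTClosure (𝒮 : Set (H →L[ℂ] H)) (A : H →L[ℂ] H) : Prop :=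
  ∃ (ι : Type) (l : Filter ι), l.NeBot ∧ ∃ F : ι → (H →L[ℂ] H),
    (∀ i, F i ∈ 𝒮) ∧ WOTTendsto l F A

/-- membership in the w*-closure of a set of operators. -/
def InWstarClosure (𝒮 : Set (H →L[ℂ] H)) (A : H →L[ℂ] H) : Prop :=
  ∃ (ι : Type) (l : Filter ι), l.NeBot ∧ ∃ F : ι → (H →L[ℂ] H),
    (∀ i, F i ∈ 𝒮) ∧ WstarTendsto l F A

end topologies

/-! ## matrices of operators, acting on `H ⊕₂ ⋯ ⊕₂ H` -/

section matrices

variable {H : Type*} [NormedAddCommGroup H] [InnerProductSpace ℂ H] [CompleteSpace H]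

/-- an `m×m` matrix of operators as an operator on the Hilbert space `⊕²_{u<m} H`. -/
def matOp {m : ℕ} (M : Matrix (Fin m) (Fin m) (H →L[ℂ] H)) :
    (PiLp 2 fun _ : Fin m => H) →L[ℂ] (PiLp 2 fun _ : Fin m => H) :=
  ((PiLp.continuousLinearEquiv 2 ℂ fun _ : Fin m => H).symm :
      ((_ : Fin m) → H) →L[ℂ] PiLp 2 fun _ : Fin m => H) ∘L
    (ContinuousLinearMap.pi fun u => ∑ v, M u v ∘L ContinuousLinearMap.proj v) ∘L
    ((PiLp.continuousLinearEquiv 2 ℂ fun _ : Fin m => H) :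
      (PiLp 2 fun _ : Fin m => H) →L[ℂ] ((_ : Fin m) → H))

end matrices

/-! ## further notions: reversed Delta, multi-analytic operators, supports, holomorphic functions -/

section more

variable {H : Type*} [NormedAddCommGroup H] [InnerProductSpace ℂ H] [CompleteSpace H]

/-- `(id - Φ_{T_1}) ∘ ⋯ ∘ (id - Φ_{T_k})(X)` (reversed order). -/
def DeltaMapRev (T : ∀ i, Fin (n i) → H →L[ℂ] H) (X : H →L[ℂ] H) : H →L[ℂ] H :=
  ((List.finRange k).reverse).foldl (fun Y i => Y - Phi T i Y) X

/-- the adjoint, with the scalar field fixed to `ℂ`. -/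
def adj {E F : Type*} [NormedAddCommGroup E] [InnerProductSpace ℂ E]
    [CompleteSpace E] [NormedAddCommGroup F] [InnerProductSpace ℂ F] [CompleteSpace F]
    (V : E →L[ℂ] F) : F →L[ℂ] E :=
  ContinuousLinearMap.adjoint V

/-- a partial isometry between Hilbert spaces. -/
def IsPartialIsometry {E F : Type*} [NormedAddCommGroup E] [InnerProductSpace ℂ E]
    [CompleteSpace E] [NormedAddCommGroup F] [InnerProductSpace ℂ F] [CompleteSpace F]
    (V : E →L[ℂ] F) : Prop :=
  V ∘L adjoint V ∘L V = V

/-- the restriction of an operator to an invariant subspace. -/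
def restrictOp {E : Type*} [NormedAddCommGroup E] [InnerProductSpace ℂ E]
    {M : Submodule ℂ E} (B : E →L[ℂ] E) (h : ∀ x ∈ M, B x ∈ M) : ↥M →L[ℂ] ↥M :=
  ContinuousLinearMap.codRestrict (B ∘L M.subtypeL) M (fun x => h x x.2)

end more

/-- a bundled Hilbert space over `ℂ`. -/
structure HilbertPkg : Type 1 where
  carrier : Type
  [grp : NormedAddCommGroup carrier]
  [ips : InnerProductSpace ℂ carrier]
  [cpl : CompleteSpace carrier]

attribute [instance] HilbertPkg.grp HilbertPkg.ips HilbertPkg.cpl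

section analytic

variable {D F : Type*} [NormedAddCommGroup D] [InnerProductSpace ℂ D] [CompleteSpace D]
  [NormedAddCommGroup F] [InnerProductSpace ℂ F] [CompleteSpace F]

/-- `A` is multi-analytic with respect to the given ampliations of the universal model. -/
def MultiAnalytic (SE : ∀ i, Fin (n i) → L2 n D →L[ℂ] L2 n D)
    (SF : ∀ i, Fin (n i) → L2 n F →L[ℂ] L2 n F)
    (A : L2 n D →L[ℂ] L2 n F) : Prop :=
  ∀ i s, A ∘L SE i s = SF i s ∘L A

/-- a closed subspace reducing for all of the `SD i s`. -/
def ReducedBy (SD : ∀ i, Fin (n i) → L2 n D →L[ℂ] L2 n D)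
    (M : Submodule ℂ (L2 n D)) : Prop :=
  IsClosed (M : Set (L2 n D)) ∧
    ∀ i s, (∀ x ∈ M, SD i s x ∈ M) ∧ ∀ x ∈ M, adjoint (SD i s) x ∈ M

/-- the support of a multi-analytic operator: the smallest reducing subspace containing
the closure of the range of `A*`. -/
def suppOf (SD : ∀ i, Fin (n i) → L2 n D →L[ℂ] L2 n D)
    (A : L2 n D →L[ℂ] L2 n F) : Submodule ℂ (L2 n D) :=
  sInf {M : Submodule ℂ (L2 n D) | ReducedBy SD M ∧ ∀ y, adjoint A y ∈ M}

/-- a Beurling type jointly invariant subspace: the full range of an inner multi-analytic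
operator. -/
def BeurlingType (S : ∀ i, Fin (n i) → L2 n ℂ →L[ℂ] L2 n ℂ)
    (SD : ∀ i, Fin (n i) → L2 n D →L[ℂ] L2 n D) (M : Submodule ℂ (L2 n D)) : Prop :=
  ∃ (P : HilbertPkg) (SL : ∀ i, Fin (n i) → L2 n P.carrier →L[ℂ] L2 n P.carrier),
    (∀ i s, IsAmpliation (S i s) (SL i s)) ∧
    ∃ Ψ : L2 n P.carrier →L[ℂ] L2 n D,
      MultiAnalytic SL SD Ψ ∧ IsPartialIsometry Ψ ∧ (M : Set (L2 n D)) = Set.range Ψ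

end analytic

section holo

variable (Λ : LambdaData n)

/-- `φ = Σ_β a_β Z_β` is a free holomorphic function on `𝐁_Λ°`: the series converges in
operator norm at every point of `𝐁_Λ°(H)`, for every Hilbert space `H`. -/
def FreeHolo (a : Word n → ℂ) : Prop :=
  ∀ (P : HilbertPkg) (X : ∀ i, Fin (n i) → P.carrier →L[ℂ] P.carrier),
    InOpenPolyball Λ X → ∃ B, SeriesTo (degSum X a) B

variable {H : Type*} [NormedAddCommGroup H] [InnerProductSpace ℂ H] [CompleteSpace H]

/-- the value `φ(X)` of the free holomorphic function with coefficients `a` at the tuple `X`. -/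
def holoEval (a : Word n → ℂ) (X : ∀ i, Fin (n i) → H →L[ℂ] H) : H →L[ℂ] H := by
  classical exact if h : ∃ B, SeriesTo (degSum X a) B then h.choose else 0

/-- the set of values `‖φ(X)‖`, over all Hilbert spaces and all `X ∈ 𝐁_Λ°(H)`. -/
def holoNormSet (a : Word n → ℂ) : Set ℝ :=
  {c | ∃ (P : HilbertPkg) (X : ∀ i, Fin (n i) → P.carrier →L[ℂ] P.carrier),
    InOpenPolyball Λ X ∧ c = ‖holoEval a X‖}

/-- the set of values `‖[φ_{uv}(X)]‖` for a matrix of free holomorphic functions. -/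
def holoMatNormSet {m : ℕ} (a : Fin m → Fin m → Word n → ℂ) : Set ℝ :=
  {c | ∃ (P : HilbertPkg) (X : ∀ i, Fin (n i) → P.carrier →L[ℂ] P.carrier),
    InOpenPolyball Λ X ∧ c = ‖matOp (Matrix.of fun u v => holoEval (a u v) X)‖}

/-- membership in `H^∞(𝐁_Λ°)`. -/
def BddHolo (a : Word n → ℂ) : Prop :=
  FreeHolo Λ a ∧ BddAbove (holoNormSet Λ a)

/-- membership in `A(𝐁_Λ°)`: free holomorphic with a continuous extension to `𝐁_Λ(H)`
for every Hilbert space `H`. -/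
def ContHolo (a : Word n → ℂ) : Prop :=
  FreeHolo Λ a ∧
  ∀ P : HilbertPkg, ∃ g : (∀ i, Fin (n i) → P.carrier →L[ℂ] P.carrier) →
      (P.carrier →L[ℂ] P.carrier),
    ContinuousOn g {X | InPolyball Λ X} ∧
    ∀ X, InOpenPolyball Λ X → g X = holoEval a X

end holo

/-! ## characteristic functions -/

section charfn

variable {H : Type*} [NormedAddCommGroup H] [InnerProductSpace ℂ H] [CompleteSpace H]

/-- `T` admits a characteristic function: there are a Hilbert space `E` and a multi-analytic
operator `Ψ : ℓ²⊗E → ℓ²⊗D(T)` with `K_T K_T^* + Ψ Ψ^* = I`. -/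
def AdmitsCharFn (S : ∀ i, Fin (n i) → L2 n ℂ →L[ℂ] L2 n ℂ)
    (T : ∀ i, Fin (n i) → H →L[ℂ] H)
    (K : H →L[ℂ] L2 n (DTcar T))
    (SD : ∀ i, Fin (n i) → L2 n (DTcar T) →L[ℂ] L2 n (DTcar T)) : Prop :=
  ∃ (P : HilbertPkg) (SE : ∀ i, Fin (n i) → L2 n P.carrier →L[ℂ] L2 n P.carrier),
    (∀ i s, IsAmpliation (S i s) (SE i s)) ∧
    ∃ Ψ : L2 n P.carrier →L[ℂ] L2 n (DTcar T),
      MultiAnalytic SE SD Ψ ∧ K ∘L adj K + Ψ ∘L adj Ψ = 1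

/-- the operator `I - K_T K_T^*`. -/
def QOp (T : ∀ i, Fin (n i) → H →L[ℂ] H) (K : H →L[ℂ] L2 n (DTcar T)) :
    L2 n (DTcar T) →L[ℂ] L2 n (DTcar T) :=
  1 - K ∘L adj K

/-- the space `M_T`, the closure of the range of `I - K_T K_T^*`. -/
def MTspace (T : ∀ i, Fin (n i) → H →L[ℂ] H) (K : H →L[ℂ] L2 n (DTcar T)) :
    Submodule ℂ (L2 n (DTcar T)) :=
  (LinearMap.range (QOp T K : L2 n (DTcar T) →ₗ[ℂ] L2 n (DTcar T))).topologicalClosure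

/-- the space `M_T` as a Hilbert space in its own right. -/
def MTcar (T : ∀ i, Fin (n i) → H →L[ℂ] H) (K : H →L[ℂ] L2 n (DTcar T)) : Type _ :=
  ↥(MTspace T K)

instance (T : ∀ i, Fin (n i) → H →L[ℂ] H) (K : H →L[ℂ] L2 n (DTcar T)) :
    NormedAddCommGroup (MTcar T K) :=
  inferInstanceAs (NormedAddCommGroup ↥(MTspace T K))
instance (T : ∀ i, Fin (n i) → H →L[ℂ] H) (K : H →L[ℂ] L2 n (DTcar T)) :
    InnerProductSpace ℂ (MTcar T K) :=
  inferInstanceAs (InnerProductSpace ℂ ↥(MTspace T K))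
instance (T : ∀ i, Fin (n i) → H →L[ℂ] H) (K : H →L[ℂ] L2 n (DTcar T)) :
    CompleteSpace (MTcar T K) :=
  inferInstanceAs (CompleteSpace ↥((LinearMap.range (QOp T K : L2 n (DTcar T) →ₗ[ℂ] L2 n (DTcar T))).topologicalClosure))

/-- the inclusion `M_T ↪ ℓ²⊗D(T)`. -/
def inclMT (T : ∀ i, Fin (n i) → H →L[ℂ] H) (K : H →L[ℂ] L2 n (DTcar T)) :
    MTcar T K →L[ℂ] L2 n (DTcar T) :=
  (MTspace T K).subtypeL

/-- the characteristic function `Θ_T = (I - K_T K_T^*)^{1/2} K_{M_T}^*`, built from a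
square root `Qh` of `I - K_T K_T^*` and the Berezin kernel `KM` of the tuple `M_T`. -/
def ThetaOf {E : Type*} [NormedAddCommGroup E] [InnerProductSpace ℂ E] [CompleteSpace E]
    (T : ∀ i, Fin (n i) → H →L[ℂ] H) (K : H →L[ℂ] L2 n (DTcar T))
    (Qh : L2 n (DTcar T) →L[ℂ] L2 n (DTcar T))
    (KM : MTcar T K →L[ℂ] L2 n E) :
    L2 n E →L[ℂ] L2 n (DTcar T) :=
  Qh ∘L inclMT T K ∘L adj KM

end charfn



section proofs

variable {k : ℕ} {n : Fin k → ℕ}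

lemma chi_apply (α w : Word n) : (chi α : L2 n ℂ) w = if w = α then 1 else 0 := by
  rcases eq_or_ne w α with rfl | h
  · rw [if_pos rfl]; exact lp.single_apply_self 2 w 1
  · rw [if_neg h]; exact lp.single_apply_ne 2 α 1 h

lemma inner_chi_left (α : Word n) (f : L2 n ℂ) : ⟪chi α, f⟫_ℂ = f α := by
  classical
  rw [chi, lp.inner_single_left]
  simp [RCLike.inner_apply]

lemma inner_chi_chi (α β : Word n) : ⟪chi α, (chi β : L2 n ℂ)⟫_ℂ = if α = β then 1 else 0 := by
  rw [inner_chi_left, chi_apply]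

lemma hasSum_chi (x : L2 n ℂ) : HasSum (fun α : Word n => x α • chi α) x := by
  have h := lp.hasSum_single (E := fun _ : Word n => ℂ) (p := 2) (by norm_num) x
  have he : (fun α : Word n => lp.single 2 α (x α)) = fun α => x α • chi α := by
    funext α
    rw [chi, ← lp.single_smul, smul_eq_mul, mul_one]
  rwa [he] at h

lemma clm_ext_chi {A B : L2 n ℂ →L[ℂ] L2 n ℂ} (h : ∀ α, A (chi α) = B (chi α)) : A = B := by
  refine ContinuousLinearMap.ext fun x => ?_
  have hx := hasSum_chi x
  have hA : HasSum (fun α => A (x α • chi α)) (A x) := hx.mapL A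
  have hB : HasSum (fun α => B (x α • chi α)) (B x) := hx.mapL B
  refine hA.unique ?_
  have he : (fun α => A (x α • chi α)) = fun α => B (x α • chi α) := by
    funext α; rw [map_smul, map_smul, h]
  rw [he]; exact hB

lemma norm_boldLam (Λ : LambdaData n) (i j : Fin k) (s : Fin (n i))
    (β : List (Fin (n j))) : ‖boldLam Λ i j s β‖ = 1 := by
  induction β with
  | nil => simp [boldLam]
  | cons t l ih =>
      rw [boldLam, List.map_cons, List.prod_cons, norm_mul, Λ.unimodular]
      rw [boldLam] at ih; rw [ih, mul_one]

lemma norm_twist (Λ : LambdaData n) (i : Fin k) (s : Fin (n i)) (α : Word n) :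
    ‖twist Λ i s α‖ = 1 := by
  rw [twist, norm_prod]
  refine Finset.prod_eq_one fun j _ => ?_
  by_cases hj : j < i
  · rw [if_pos hj, norm_boldLam]
  · rw [if_neg hj, norm_one]

lemma conj_mul_self {z : ℂ} (hz : ‖z‖ = 1) : (starRingEnd ℂ) z * z = 1 := by
  have h : (Complex.normSq z : ℂ) = 1 := by
    rw [Complex.normSq_eq_norm_sq, hz]; norm_num
  rw [mul_comm, Complex.mul_conj, h]

lemma twist_congr (Λ : LambdaData n) (i : Fin k) (s : Fin (n i)) {α α' : Word n}
    (h : ∀ j, j < i → α j = α' j) : twist Λ i s α = twist Λ i s α' := by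
  unfold twist
  refine Finset.prod_congr rfl fun j _ => ?_
  by_cases hj : j < i
  · rw [if_pos hj, if_pos hj, h j hj]
  · rw [if_neg hj, if_neg hj]

lemma boldLam_cons (Λ : LambdaData n) (i j : Fin k) (s : Fin (n i)) (t : Fin (n j))
    (l : List (Fin (n j))) :
    boldLam Λ i j s (t :: l) = Λ.lam i j s t * boldLam Λ i j s l := by
  rw [boldLam, boldLam, List.map_cons, List.prod_cons]

lemma twist_update_cons (Λ : LambdaData n) {i j : Fin k} (hij : i ≠ j) (s : Fin (n i))
    (t : Fin (n j)) (α : Word n) (l : List (Fin (n j))) :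
    twist Λ i s (Function.update α j (t :: l)) =
      (if j < i then Λ.lam i j s t else 1) * twist Λ i s (Function.update α j l) := by
  classical
  unfold twist
  rw [Finset.prod_eq_mul_prod_sdiff_singleton_of_mem (Finset.mem_univ j)
        (fun j' => if j' < i then boldLam Λ i j' s (Function.update α j (t :: l) j') else 1),
      Finset.prod_eq_mul_prod_sdiff_singleton_of_mem (Finset.mem_univ j)
        (fun j' => if j' < i then boldLam Λ i j' s (Function.update α j l j') else 1)]
  have hoff : ∏ j' ∈ Finset.univ \ {j},
        (if j' < i then boldLam Λ i j' s (Function.update α j (t :: l) j') else 1)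
      = ∏ j' ∈ Finset.univ \ {j},
        (if j' < i then boldLam Λ i j' s (Function.update α j l j') else 1) := by
    refine Finset.prod_congr rfl fun j' hj' => ?_
    have hne : j' ≠ j := by simpa using (Finset.mem_sdiff.1 hj').2
    rw [Function.update_of_ne hne, Function.update_of_ne hne]
  rw [hoff, Function.update_self, Function.update_self, boldLam_cons]
  by_cases hji : j < i
  · rw [if_pos hji, if_pos hji, if_pos hji]; ring
  · rw [if_neg hji, if_neg hji, if_neg hji]; ring

lemma update_cons_tail {α : Word n} {i : Fin k} {s : Fin (n i)}
    (h : (α i).head? = some s) :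
    Function.update (Function.update α i (α i).tail) i
      (s :: (Function.update α i (α i).tail) i) = α := by
  funext j
  rcases eq_or_ne j i with rfl | hj
  · rw [Function.update_self, Function.update_self]
    exact List.cons_head?_tail h
  · rw [Function.update_of_ne hj, Function.update_of_ne hj]

variable (Λ : LambdaData n) (S : ∀ i, Fin (n i) → L2 n ℂ →L[ℂ] L2 n ℂ)

lemma adj_chi (hS : IsTwistedShift Λ S) (i : Fin k) (s : Fin (n i)) (α : Word n) :
    adj (S i s) (chi α) =
      if (α i).head? = some s then
        (starRingEnd ℂ) (twist Λ i s α) • chi (Function.update α i (α i).tail)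
      else 0 := by
  classical
  have hcoord : ∀ w : Word n, (adj (S i s) (chi α) : L2 n ℂ) w
      = (starRingEnd ℂ) (twist Λ i s w) *
          (if Function.update w i (s :: w i) = α then 1 else 0) := by
    intro w
    rw [← inner_chi_left w]
    simp only [adj]
    rw [ContinuousLinearMap.adjoint_inner_right, hS i s w, inner_smul_left, inner_chi_chi]
  by_cases h : (α i).head? = some s
  · rw [if_pos h]
    ext w
    rw [hcoord w, lp.coeFn_smul, Pi.smul_apply, chi_apply, smul_eq_mul]
    rcases eq_or_ne w (Function.update α i (α i).tail) with rfl | hw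
    · rw [if_pos rfl, if_pos (update_cons_tail h), mul_one, mul_one]
      congr 1
      exact twist_congr Λ i s fun j hj => (Function.update_of_ne (ne_of_lt hj) _ _)
    · rw [if_neg hw, if_neg ?_, mul_zero, mul_zero]
      intro hc
      apply hw
      funext j
      rcases eq_or_ne j i with rfl | hj
      · have h1 : α j = s :: w j := by rw [← hc, Function.update_self]
        rw [Function.update_self, h1, List.tail_cons]
      · rw [Function.update_of_ne hj, ← hc, Function.update_of_ne hj]
  · rw [if_neg h]
    ext w
    rw [hcoord w]
    have hne : Function.update w i (s :: w i) ≠ α := by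
      intro hc; apply h; rw [← hc, Function.update_self]; rfl
    rw [if_neg hne, mul_zero]
    rfl

end proofs

/-- The twisted shifts `S_{i,s}` are isometries with pairwise orthogonal
ranges for each fixed `i`; each `𝐒_i` is a row isometry (computed on basis vectors); and the
tuple `𝐒 = (𝐒_1,…,𝐒_k)` is doubly `Λ`-commuting. -/
theorem statement_0 {k : ℕ} {n : Fin k → ℕ} (Λ : LambdaData n)
    (S : ∀ i, Fin (n i) → L2 n ℂ →L[ℂ] L2 n ℂ) (hS : IsTwistedShift Λ S) :
    (∀ (i : Fin k) (s : Fin (n i)) (x : L2 n ℂ), ‖S i s x‖ = ‖x‖) ∧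
    (∀ (i : Fin k) (s t : Fin (n i)), s ≠ t →
      ∀ x y : L2 n ℂ, ⟪S i s x, S i t y⟫_ℂ = 0) ∧
    (∀ (i : Fin k) (α : Word n),
      (∑ s : Fin (n i), S i s (adj (S i s) (chi α))) =
        if α i = [] then 0 else chi α) ∧
    (∀ i j : Fin k, i ≠ j → ∀ (s : Fin (n i)) (t : Fin (n j)),
      adj (S i s) ∘L S j t =
        (starRingEnd ℂ) (Λ.lam i j s t) • (S j t ∘L adj (S i s))) := by
  classical
  -- `S* S = 1`
  have hadj1 : ∀ (i : Fin k) (s : Fin (n i)), adj (S i s) ∘L S i s = 1 := by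
    intro i s
    apply clm_ext_chi
    intro α
    rw [ContinuousLinearMap.comp_apply, ContinuousLinearMap.one_apply, hS i s α, map_smul,
      adj_chi Λ S hS]
    have hhead : ((Function.update α i (s :: α i)) i).head? = some s := by
      rw [Function.update_self]; rfl
    rw [if_pos hhead]
    have hvec : Function.update (Function.update α i (s :: α i)) i
        ((Function.update α i (s :: α i)) i).tail = α := by
      funext j
      rcases eq_or_ne j i with rfl | hj
      · rw [Function.update_self, Function.update_self, List.tail_cons]
      · rw [Function.update_of_ne hj, Function.update_of_ne hj]
    rw [hvec]
    have htw : twist Λ i s (Function.update α i (s :: α i)) = twist Λ i s α :=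
      twist_congr Λ i s fun j hj => Function.update_of_ne (ne_of_lt hj) _ _
    rw [htw, smul_smul, mul_comm, conj_mul_self (norm_twist Λ i s α), one_smul]
  -- `S_s* S_t = 0` for `s ≠ t`
  have hadj0 : ∀ (i : Fin k) (s t : Fin (n i)), s ≠ t → adj (S i s) ∘L S i t = 0 := by
    intro i s t hst
    apply clm_ext_chi
    intro α
    rw [ContinuousLinearMap.comp_apply, ContinuousLinearMap.zero_apply, hS i t α, map_smul,
      adj_chi Λ S hS]
    have hhead : ¬ ((Function.update α i (t :: α i)) i).head? = some s := by
      rw [Function.update_self]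
      intro hc
      exact hst (Option.some_injective _ hc).symm
    rw [if_neg hhead, smul_zero]
  refine ⟨?_, ?_, ?_, ?_⟩
  · -- isometries
    intro i s x
    have h3 : ContinuousLinearMap.adjoint (S i s) (S i s x) = x := by
      have := congrArg (fun A => A x) (hadj1 i s)
      simpa [adj] using this
    have h1 : ⟪S i s x, S i s x⟫_ℂ = ⟪x, x⟫_ℂ := by
      rw [← ContinuousLinearMap.adjoint_inner_left (S i s) x (S i s x), h3]
    have h5 : ‖S i s x‖ ^ 2 = ‖x‖ ^ 2 := by
      have h4 := congrArg RCLike.re h1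
      rwa [inner_self_eq_norm_sq, inner_self_eq_norm_sq] at h4
    have h6 := congrArg Real.sqrt h5
    rwa [Real.sqrt_sq (norm_nonneg _), Real.sqrt_sq (norm_nonneg _)] at h6
  · -- orthogonal ranges
    intro i s t hst x y
    have h3 : ContinuousLinearMap.adjoint (S i s) (S i t y) = 0 := by
      have := congrArg (fun A => A y) (hadj0 i s t hst)
      simpa [adj] using this
    rw [← ContinuousLinearMap.adjoint_inner_right (S i s) x (S i t y), h3, inner_zero_right]
  · -- row isometry on basis vectors
    intro i α
    have hterm : ∀ s : Fin (n i), S i s (adj (S i s) (chi α)) =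
        if (α i).head? = some s then (chi α : L2 n ℂ) else 0 := by
      intro s
      rw [adj_chi Λ S hS]
      by_cases h : (α i).head? = some s
      · rw [if_pos h, if_pos h, map_smul, hS i s _, update_cons_tail h]
        have htw : twist Λ i s (Function.update α i (α i).tail) = twist Λ i s α :=
          twist_congr Λ i s fun j hj => Function.update_of_ne (ne_of_lt hj) _ _
        rw [htw, smul_smul, conj_mul_self (norm_twist Λ i s α), one_smul]
      · rw [if_neg h, if_neg h, map_zero]
    rw [Finset.sum_congr rfl fun s _ => hterm s]
    cases hαi : α i with
    | nil =>
        rw [if_pos rfl]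
        exact Finset.sum_eq_zero fun s _ => if_neg (by simp)
    | cons a l =>
        rw [if_neg (by simp)]
        calc (∑ s : Fin (n i), if (a :: l).head? = some s then (chi α : L2 n ℂ) else 0)
            = ∑ s : Fin (n i), if a = s then (chi α : L2 n ℂ) else 0 := by
              refine Finset.sum_congr rfl fun s _ => ?_
              simp only [List.head?_cons, Option.some.injEq]
          _ = chi α := by rw [Finset.sum_ite_eq]; simp
  · -- doubly Λ-commuting
    intro i j hij s t
    apply clm_ext_chi
    intro α
    rw [ContinuousLinearMap.comp_apply, ContinuousLinearMap.smul_apply,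
      ContinuousLinearMap.comp_apply, hS j t α, map_smul, adj_chi Λ S hS, adj_chi Λ S hS]
    have hα₁i : Function.update α j (t :: α j) i = α i := Function.update_of_ne hij _ _
    by_cases h : (α i).head? = some s
    · rw [if_pos (by rw [hα₁i]; exact h), if_pos h, map_smul, hS j t _]
      -- vectors
      have hvec : Function.update (Function.update α j (t :: α j)) i
            ((Function.update α j (t :: α j)) i).tail
          = Function.update (Function.update α i (α i).tail) j
              (t :: (Function.update α i (α i).tail) j) := by
        rw [hα₁i, Function.update_of_ne (Ne.symm hij), Function.update_comm hij]
      rw [hvec]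
      -- scalars
      rw [smul_smul, smul_smul, smul_smul]
      congr 1
      have e1 : twist Λ i s (Function.update α j (t :: α j)) =
          (if j < i then Λ.lam i j s t else 1) * twist Λ i s α := by
        have h1 := twist_update_cons Λ hij s t α (α j)
        rwa [Function.update_eq_self] at h1
      have e2 : twist Λ j t α =
          (if i < j then Λ.lam j i t s else 1) *
            twist Λ j t (Function.update α i (α i).tail) := by
        have h2 := twist_update_cons Λ (Ne.symm hij) t s (Function.update α i (α i).tail)
          (α i).tail
        rw [Function.update_idem, Function.update_idem] at h2
        have h3 : Function.update α i (s :: (α i).tail) = α := by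
          funext j'
          rcases eq_or_ne j' i with rfl | hj'
          · rw [Function.update_self, List.cons_head?_tail h]
          · rw [Function.update_of_ne hj']
        rwa [h3] at h2
      rw [e1, e2, map_mul]
      rcases hij.lt_or_gt with hlt | hlt
      · rw [if_pos hlt, if_neg (not_lt_of_gt hlt), map_one,
          Λ.hermitian i j s t hij]
        ring
      · rw [if_neg (not_lt_of_gt hlt), if_pos hlt]
        ring
    · rw [if_neg (by rw [hα₁i]; exact h), if_neg h, map_zero, smul_zero, smul_zero]

end Polyball
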